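/- A finite abelian group G admits an unmixed Beauville structure if and only if there exists a natural number n with gcd(n,6) = 1 such that G is isomorphic to (ZMod n) × (ZMod n). -/

import Mathlib

set_option linter.unreachableTactic false
set_option linter.unusedTactic false
set_option linter.unusedSectionVars false

def IsBeauvilleStructure {G : Type*} [Group G] (x y z a b c : G) : Prop :=
  x * y * z = 1 ∧ a * b * c = 1 ∧
  Subgroup.closure {x, y, z} = ⊤ ∧ Subgroup.closure {a, b, c} = ⊤ ∧
  ∀ u ∈ ({x, y, z} : Set G), ∀ v ∈ ({a, b, c} : Set G), ∀ g : G, ∀ i j : ℤ,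
    u ^ i = g * v ^ j * g⁻¹ → u ^ i = 1



lemma beauville_map {G H : Type*} [Group G] [Group H] (e : G ≃* H)
    {x y z a b c : G} (h : IsBeauvilleStructure x y z a b c) :
    IsBeauvilleStructure (e x) (e y) (e z) (e a) (e b) (e c) := by
  obtain ⟨h1, h2, h3, h4, h5⟩ := h
  have himg : ∀ s t r : G, Subgroup.closure {s, t, r} = ⊤ →
      Subgroup.closure {e s, e t, e r} = ⊤ := by
    intro s t r hc
    have : ({e s, e t, e r} : Set H) = e '' {s, t, r} := by
      simp [Set.image_insert_eq]
    have hmap := MonoidHom.map_closure e.toMonoidHom {s, t, r}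
    rw [hc, Subgroup.map_top_of_surjective _ e.surjective] at hmap
    rw [this]
    simpa using hmap.symm
  refine ⟨by rw [← map_mul, ← map_mul, h1, map_one],
    by rw [← map_mul, ← map_mul, h2, map_one], himg _ _ _ h3, himg _ _ _ h4, ?_⟩
  rintro u hu v hv g i j huv
  simp only [Set.mem_insert_iff, Set.mem_singleton_iff] at hu hv
  obtain ⟨u', hu', rfl⟩ : ∃ u' ∈ ({x, y, z} : Set G), e u' = u := by
    rcases hu with rfl | rfl | rfl
    · exact ⟨x, by simp, rfl⟩
    · exact ⟨y, by simp [Set.mem_insert_iff], rfl⟩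
    · exact ⟨z, by simp [Set.mem_insert_iff], rfl⟩
  obtain ⟨v', hv', rfl⟩ : ∃ v' ∈ ({a, b, c} : Set G), e v' = v := by
    rcases hv with rfl | rfl | rfl
    · exact ⟨a, by simp, rfl⟩
    · exact ⟨b, by simp [Set.mem_insert_iff], rfl⟩
    · exact ⟨c, by simp [Set.mem_insert_iff], rfl⟩
  have : u' ^ i = (e.symm g) * v' ^ j * (e.symm g)⁻¹ := by
    apply e.injective
    simpa [map_zpow] using huv
  have := h5 u' hu' v' hv' (e.symm g) i j this
  rw [← map_zpow, this, map_one]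



lemma zmod_units {n : ℕ} (hn : Nat.gcd n 6 = 1) :
    IsUnit (2 : ZMod n) ∧ IsUnit (3 : ZMod n) := by
  have h2 : Nat.Coprime 2 n := Nat.Coprime.symm (Nat.Coprime.coprime_dvd_right (by norm_num) hn)
  have h3 : Nat.Coprime 3 n := Nat.Coprime.symm (Nat.Coprime.coprime_dvd_right (by norm_num) hn)
  exact ⟨by simpa using (ZMod.isUnit_iff_coprime 2 n).2 h2,
    by simpa using (ZMod.isUnit_iff_coprime 3 n).2 h3⟩

lemma pair_zsmul_zero {n : ℕ} {j : ℤ} (h : ((j : ZMod n)) = 0) (w : ZMod n × ZMod n) :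
    j • w = 0 := by
  refine Prod.ext ?_ ?_ <;>
    · simp only [Prod.smul_fst, Prod.smul_snd, Prod.fst_zero, Prod.snd_zero]
      rw [zsmul_eq_mul, h, zero_mul]

lemma beauville_construction (n : ℕ) (hn : Nat.gcd n 6 = 1) :
    ∃ x y z a b c : Multiplicative (ZMod n × ZMod n), IsBeauvilleStructure x y z a b c := by
  have hn0 : n ≠ 0 := by rintro rfl; simp at hn
  haveI : NeZero n := ⟨hn0⟩
  obtain ⟨hu2, hu3⟩ := zmod_units hn
  refine ⟨.ofAdd (1, 0), .ofAdd (0, 1), .ofAdd (-1, -1),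
          .ofAdd (1, 2), .ofAdd (3, 4), .ofAdd (-4, -6), ?_, ?_, ?_, ?_, ?_⟩
  · apply Multiplicative.toAdd.injective
    simp [Prod.ext_iff]
  · apply Multiplicative.toAdd.injective
    simp [Prod.ext_iff]
    constructor <;> ring
  · rw [Subgroup.eq_top_iff']
    intro g
    have hg : g = (Multiplicative.ofAdd ((1 : ZMod n), (0 : ZMod n))) ^ ((Multiplicative.toAdd g).1.val)
        * (Multiplicative.ofAdd ((0 : ZMod n), (1 : ZMod n))) ^ ((Multiplicative.toAdd g).2.val) := by
      apply Multiplicative.toAdd.injective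
      rw [toAdd_mul, toAdd_pow, toAdd_pow, toAdd_ofAdd, toAdd_ofAdd]
      refine (Prod.ext ?_ ?_).symm <;>
      · simp only [Prod.fst_add, Prod.snd_add, Prod.smul_fst, Prod.smul_snd]
        try dsimp only
        rw [nsmul_eq_mul, nsmul_eq_mul]
        simp [ZMod.natCast_val, ZMod.cast_id]
    rw [hg]
    exact mul_mem (pow_mem (Subgroup.subset_closure (by simp)) _)
      (pow_mem (Subgroup.subset_closure (by simp)) _)
  · rw [Subgroup.eq_top_iff']
    intro g
    obtain ⟨u2, hu2'⟩ := hu2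
    set s := (Multiplicative.toAdd g).1 with hs
    set t := (Multiplicative.toAdd g).2 with ht
    set jj : ZMod n := ↑u2⁻¹ * (2 * s - t) with hjj
    set ii : ZMod n := s - 3 * jj with hii
    have h2j : 2 * jj = 2 * s - t := by
      rw [hjj, ← mul_assoc, ← hu2', Units.mul_inv, one_mul]
    have hg : g = (Multiplicative.ofAdd ((1 : ZMod n), (2 : ZMod n))) ^ ii.val
        * (Multiplicative.ofAdd ((3 : ZMod n), (4 : ZMod n))) ^ jj.val := by
      apply Multiplicative.toAdd.injective
      rw [toAdd_mul, toAdd_pow, toAdd_pow, toAdd_ofAdd, toAdd_ofAdd]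
      refine (Prod.ext ?_ ?_).symm <;>
      · simp only [Prod.fst_add, Prod.snd_add, Prod.smul_fst, Prod.smul_snd]
        try dsimp only
        rw [nsmul_eq_mul, nsmul_eq_mul]
        simp only [ZMod.natCast_val, ZMod.cast_id]
        rw [hii]
        first
        | linear_combination (3 : ZMod n) * h2j - 3 * h2j
        | linear_combination -h2j
    rw [hg]
    exact mul_mem (pow_mem (Subgroup.subset_closure (by simp)) _)
      (pow_mem (Subgroup.subset_closure (by simp)) _)
  · rintro u hu v hv g i j huv
    have hconj : g * (v ^ j) * g⁻¹ = v ^ j := by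
      rw [mul_comm g (v ^ j), mul_inv_cancel_right]
    rw [hconj] at huv
    rw [huv]
    simp only [Set.mem_insert_iff, Set.mem_singleton_iff] at hu hv
    have hadd : (i : ℤ) • Multiplicative.toAdd u = (j : ℤ) • Multiplicative.toAdd v := by
      have := congrArg Multiplicative.toAdd huv
      simpa using this
    have hJ : ((j : ZMod n)) = 0 := by
      have e1 := congrArg Prod.fst hadd
      have e2 := congrArg Prod.snd hadd
      rcases hu with rfl | rfl | rfl <;> rcases hv with rfl | rfl | rfl <;>
        · simp only [toAdd_ofAdd, Prod.smul_fst, Prod.smul_snd] at e1 e2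
          try dsimp only at e1 e2
          rw [zsmul_eq_mul, zsmul_eq_mul] at e1 e2
          first
          | linear_combination e1 - e2
          | linear_combination e2 - e1
          | linear_combination e1
          | linear_combination -e1
          | linear_combination e2
          | linear_combination -e2
          | (apply hu2.mul_right_cancel; rw [zero_mul]; first
              | linear_combination e1 - e2 | linear_combination e2 - e1
              | linear_combination e1 | linear_combination -e1
              | linear_combination e2 | linear_combination -e2)
          | (apply hu3.mul_right_cancel; rw [zero_mul]; first
              | linear_combination e1 - e2 | linear_combination e2 - e1
              | linear_combination e1 | linear_combination -e1
              | linear_combination e2 | linear_combination -e2)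
          | (apply (hu2.mul hu2).mul_right_cancel; rw [zero_mul]; first
              | linear_combination e1 - e2 | linear_combination e2 - e1
              | linear_combination e1 | linear_combination -e1
              | linear_combination e2 | linear_combination -e2)
          | (apply (hu2.mul hu3).mul_right_cancel; rw [zero_mul]; first
              | linear_combination e1 - e2 | linear_combination e2 - e1
              | linear_combination e1 | linear_combination -e1
              | linear_combination e2 | linear_combination -e2)
    apply Multiplicative.toAdd.injective
    rw [toAdd_zpow, toAdd_one]
    exact pair_zsmul_zero hJ _


section fwd
variable {G : Type*} [CommGroup G] [Finite G]

lemma closure_pair_top {x y z : G} (h1 : x * y * z = 1)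
    (h3 : Subgroup.closure {x, y, z} = ⊤) : Subgroup.closure {x, y} = ⊤ := by
  have hz : z ∈ Subgroup.closure ({x, y} : Set G) := by
    have hz' : z = (x * y)⁻¹ := by
      rw [eq_inv_iff_mul_eq_one, mul_comm]; exact h1
    rw [hz']
    exact inv_mem (mul_mem (Subgroup.subset_closure (by simp))
      (Subgroup.subset_closure (by simp)))
  rw [eq_top_iff, ← h3]
  apply Subgroup.closure_le _ |>.2
  rintro w (rfl | rfl | rfl)
  · exact Subgroup.subset_closure (by simp)
  · exact Subgroup.subset_closure (by simp)
  · exact hz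

lemma exponent_surjection {x y : G} (hxy : Subgroup.closure {x, y} = ⊤) :
    ∃ F : Multiplicative (ZMod (Monoid.exponent G) × ZMod (Monoid.exponent G)) →* G,
      Function.Surjective F ∧
      F (Multiplicative.ofAdd (1, 0)) = x ∧ F (Multiplicative.ofAdd (0, 1)) = y := by
  set n := Monoid.exponent G with hn
  have hpow : ∀ g : G, (zmultiplesHom (Additive G) (Additive.ofMul g)) (n : ℤ) = 0 := by
    intro g
    show (n : ℤ) • Additive.ofMul g = 0
    rw [natCast_zsmul]
    show Additive.ofMul (g ^ n) = 0
    rw [Monoid.pow_exponent_eq_one]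
    rfl
  set fx : ZMod n →+ Additive G :=
    ZMod.lift n ⟨zmultiplesHom (Additive G) (Additive.ofMul x), hpow x⟩ with hfx
  set fy : ZMod n →+ Additive G :=
    ZMod.lift n ⟨zmultiplesHom (Additive G) (Additive.ofMul y), hpow y⟩ with hfy
  set F : Multiplicative (ZMod n × ZMod n) →* G :=
    AddMonoidHom.toMultiplicativeLeft (fx.coprod fy) with hF
  have hFx : F (Multiplicative.ofAdd (1, 0)) = x := by
    show Additive.toMul ((fx.coprod fy) (1, 0)) = x
    rw [AddMonoidHom.coprod_apply, map_zero, add_zero]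
    have : ((1 : ZMod n)) = ((1 : ℤ) : ZMod n) := by push_cast; rfl
    rw [hfx, this, ZMod.lift_coe]
    show Additive.toMul ((1 : ℤ) • Additive.ofMul x) = x
    simp
  have hFy : F (Multiplicative.ofAdd (0, 1)) = y := by
    show Additive.toMul ((fx.coprod fy) (0, 1)) = y
    rw [AddMonoidHom.coprod_apply, map_zero, zero_add]
    have : ((1 : ZMod n)) = ((1 : ℤ) : ZMod n) := by push_cast; rfl
    rw [hfy, this, ZMod.lift_coe]
    show Additive.toMul ((1 : ℤ) • Additive.ofMul y) = y
    simp
  refine ⟨F, ?_, hFx, hFy⟩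
  rw [← MonoidHom.range_eq_top]
  rw [eq_top_iff, ← hxy]
  apply Subgroup.closure_le _ |>.2
  rintro w (rfl | rfl)
  · exact ⟨Multiplicative.ofAdd (1, 0), hFx⟩
  · exact ⟨Multiplicative.ofAdd (0, 1), hFy⟩

end fwd


section fwd
variable {G : Type*} [CommGroup G] [Finite G]

lemma exponent_dvd_lcm {x y : G} (hxy : Subgroup.closure {x, y} = ⊤) :
    Monoid.exponent G ∣ Nat.lcm (orderOf x) (orderOf y) := by
  rw [Monoid.exponent_dvd_iff_forall_pow_eq_one]
  intro g
  obtain ⟨i, j, hij⟩ := Subgroup.mem_closure_pair.1 (hxy ▸ Subgroup.mem_top g)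
  set L := Nat.lcm (orderOf x) (orderOf y) with hL
  have hx : x ^ (L : ℤ) = 1 := by
    rw [zpow_natCast]
    exact orderOf_dvd_iff_pow_eq_one.1 (Nat.dvd_lcm_left _ _)
  have hy : y ^ (L : ℤ) = 1 := by
    rw [zpow_natCast]
    exact orderOf_dvd_iff_pow_eq_one.1 (Nat.dvd_lcm_right _ _)
  calc g ^ L = (x ^ i * y ^ j) ^ (L : ℤ) := by rw [hij, zpow_natCast]
    _ = (x ^ (L : ℤ)) ^ i * (y ^ (L : ℤ)) ^ j := by
        rw [mul_zpow, ← zpow_mul, ← zpow_mul, ← zpow_mul, ← zpow_mul, mul_comm i, mul_comm j]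
    _ = 1 := by rw [hx, hy, one_zpow, one_zpow, one_mul]

-- trivial intersection of cyclic subgroups from the Beauville condition
lemma subgroup_prod_dvd {u v : G}
    (huv : ∀ (i j : ℤ), u ^ i = v ^ j → u ^ i = 1)
    {d : ℕ} (hdu : d ∣ orderOf u) (hdv : d ∣ orderOf v) :
    d * d ∣ Nat.card G := by
  have hu0 : orderOf u ≠ 0 := (orderOf_pos u).ne'
  have hv0 : orderOf v ≠ 0 := (orderOf_pos v).ne'
  set uu := u ^ (orderOf u / d) with huu
  set vv := v ^ (orderOf v / d) with hvv
  have hou : orderOf uu = d := orderOf_pow_orderOf_div hu0 hdu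
  have hov : orderOf vv = d := orderOf_pow_orderOf_div hv0 hdv
  set f : (Subgroup.zpowers uu) × (Subgroup.zpowers vv) →* G :=
    ((Subgroup.zpowers uu).subtype).coprod ((Subgroup.zpowers vv).subtype) with hf
  have hinj : Function.Injective f := by
    rw [injective_iff_map_eq_one]
    rintro ⟨⟨α, hα⟩, ⟨β, hβ⟩⟩ h1
    have hαβ : α * β = 1 := h1
    obtain ⟨k, hk⟩ := Subgroup.mem_zpowers_iff.1 hα
    obtain ⟨l, hl⟩ := Subgroup.mem_zpowers_iff.1 hβ
    have hα' : α = u ^ (((orderOf u / d : ℕ) : ℤ) * k) := by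
      rw [← hk, huu, zpow_mul, zpow_natCast]
    have hβinv : α = v ^ (-(((orderOf v / d : ℕ) : ℤ) * l)) := by
      have : α = β⁻¹ := eq_inv_of_mul_eq_one_left hαβ
      rw [this, ← hl, hvv, ← zpow_natCast, ← zpow_mul, ← zpow_neg]
    have := huv _ _ (hα'.symm.trans hβinv)
    have hα1 : α = 1 := by rw [hα', this]
    have hβ1 : β = 1 := by
      have : α = β⁻¹ := eq_inv_of_mul_eq_one_left hαβ
      rw [this] at hα1
      simpa using hα1.symm
    simp [Prod.ext_iff, Subtype.ext_iff, hα1, hβ1]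
  have hcard : Nat.card ((Subgroup.zpowers uu) × (Subgroup.zpowers vv)) = d * d := by
    rw [Nat.card_prod, Nat.card_zpowers, Nat.card_zpowers, hou, hov]
  have : Nat.card f.range = d * d := by
    rw [← hcard]
    exact (Nat.card_congr (MonoidHom.ofInjective hinj).toEquiv).symm
  rw [← this]
  exact Subgroup.card_subgroup_dvd_card _
end fwd

set_option synthInstance.maxSize 2000 in
set_option synthInstance.maxHeartbeats 1000000 in
set_option maxHeartbeats 4000000 in
lemma key2 : ∀ X Y A B : ZMod 2 × ZMod 2,
  (X.1 * Y.2 - X.2 * Y.1 ≠ 0 ∧ A.1 * B.2 - A.2 * B.1 ≠ 0) →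
  ∃ U V : ZMod 2 × ZMod 2,
    (U = X ∨ U = Y ∨ U = -(X+Y)) ∧ (V = A ∨ V = B ∨ V = -(A+B)) ∧
    (U = V ∨ U = V + V) ∧ U ≠ 0 := by decide

set_option synthInstance.maxSize 2000 in
set_option synthInstance.maxHeartbeats 1000000 in
set_option maxHeartbeats 4000000 in
lemma key3 : ∀ X Y A B : ZMod 3 × ZMod 3,
  (X.1 * Y.2 - X.2 * Y.1 ≠ 0 ∧ A.1 * B.2 - A.2 * B.1 ≠ 0) →
  ∃ U V : ZMod 3 × ZMod 3,
    (U = X ∨ U = Y ∨ U = -(X+Y)) ∧ (V = A ∨ V = B ∨ V = -(A+B)) ∧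
    (U = V ∨ U = V + V) ∧ U ≠ 0 := by decide




lemma det_ne_zero {F : Type*} [Field F] {X Y : F × F}
    (h1 : ∃ I J : F, I • X + J • Y = ((1 : F), (0 : F)))
    (h2 : ∃ I J : F, I • X + J • Y = ((0 : F), (1 : F))) :
    X.1 * Y.2 - X.2 * Y.1 ≠ 0 := by
  obtain ⟨I1, J1, e1⟩ := h1
  obtain ⟨I2, J2, e2⟩ := h2
  intro hdet
  have e1a := congrArg Prod.fst e1
  have e1b := congrArg Prod.snd e1
  have e2a := congrArg Prod.fst e2
  have e2b := congrArg Prod.snd e2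
  simp only [Prod.fst_add, Prod.snd_add, Prod.smul_fst, Prod.smul_snd, smul_eq_mul] at e1a e1b e2a e2b
  have hY2 : Y.2 = 0 := by
    first
    | linear_combination (Y.2 * e1a - Y.1 * e1b) + I1 * hdet
    | linear_combination (Y.2 * e1a - Y.1 * e1b) - I1 * hdet
    | linear_combination -(Y.2 * e1a - Y.1 * e1b) + I1 * hdet
    | linear_combination -(Y.2 * e1a - Y.1 * e1b) - I1 * hdet
  have hY1 : Y.1 = 0 := by
    first
    | linear_combination (Y.1 * e2b - Y.2 * e2a) + I2 * hdet
    | linear_combination (Y.1 * e2b - Y.2 * e2a) - I2 * hdet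
    | linear_combination -(Y.1 * e2b - Y.2 * e2a) + I2 * hdet
    | linear_combination -(Y.1 * e2b - Y.2 * e2a) - I2 * hdet
  have hX2 : X.2 = 0 := by
    first
    | linear_combination (X.2 * e1a - X.1 * e1b) + J1 * hdet
    | linear_combination (X.2 * e1a - X.1 * e1b) - J1 * hdet
    | linear_combination -(X.2 * e1a - X.1 * e1b) + J1 * hdet
    | linear_combination -(X.2 * e1a - X.1 * e1b) - J1 * hdet
  have hX1 : X.1 = 0 := by
    first
    | linear_combination (X.1 * e2b - X.2 * e2a) + J2 * hdet
    | linear_combination (X.1 * e2b - X.2 * e2a) - J2 * hdet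
    | linear_combination -(X.1 * e2b - X.2 * e2a) + J2 * hdet
    | linear_combination -(X.1 * e2b - X.2 * e2a) - J2 * hdet
  rw [hX1, hY1] at e1a
  simp at e1a

lemma msmul_eq_zero_iff {n p m : ℕ} [NeZero n] (hpn : p ∣ n) (hmp : m * p = n) (c : ZMod n) :
    m • c = 0 ↔ (ZMod.castHom hpn (ZMod p)) c = 0 := by
  have hm0 : m ≠ 0 := by
    rintro rfl; exact (NeZero.ne n) (by omega)
  have hcast : (ZMod.castHom hpn (ZMod p)) c = ((c.val : ℕ) : ZMod p) := by
    rw [ZMod.castHom_apply, ZMod.natCast_val]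
  have hsm : m • c = ((m * c.val : ℕ) : ZMod n) := by
    conv_lhs => rw [show c = ((c.val : ℕ) : ZMod n) by rw [ZMod.natCast_val, ZMod.cast_id]]
    rw [nsmul_eq_mul, Nat.cast_mul]
  rw [hcast, hsm, ZMod.natCast_eq_zero_iff, ZMod.natCast_eq_zero_iff]
  have h' : (m * p) ∣ m * c.val ↔ p ∣ c.val := Nat.mul_dvd_mul_iff_left (Nat.pos_of_ne_zero hm0)
  rw [hmp] at h'
  exact h'

set_option maxHeartbeats 1000000 in
lemma lift_contradiction {n p : ℕ} [NeZero n] (hp : p.Prime) (hpn : p ∣ n)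
    (key : ∀ X Y A B : ZMod p × ZMod p,
      (X.1 * Y.2 - X.2 * Y.1 ≠ 0 ∧ A.1 * B.2 - A.2 * B.1 ≠ 0) →
      ∃ U V : ZMod p × ZMod p,
        (U = X ∨ U = Y ∨ U = -(X+Y)) ∧ (V = A ∨ V = B ∨ V = -(A+B)) ∧
        (U = V ∨ U = V + V) ∧ U ≠ 0)
    {x y z a b c : Multiplicative (ZMod n × ZMod n)}
    (h : IsBeauvilleStructure x y z a b c) : False := by
  haveI : NeZero p := ⟨hp.ne_zero⟩
  haveI : Fact p.Prime := ⟨hp⟩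
  obtain ⟨h1, h2, h3, h4, h5⟩ := h
  have hxy := closure_pair_top h1 h3
  have hab := closure_pair_top h2 h4
  set φ : ZMod n →+* ZMod p := ZMod.castHom hpn (ZMod p) with hφ
  set π : ZMod n × ZMod n →+ ZMod p × ZMod p :=
    (φ.toAddMonoidHom).prodMap (φ.toAddMonoidHom) with hπ
  obtain ⟨m, hmp⟩ : ∃ m, m * p = n := by
    obtain ⟨m, hm⟩ := hpn; exact ⟨m, by rw [hm, Nat.mul_comm]⟩
  -- generation of targets
  have gen : ∀ (u v : Multiplicative (ZMod n × ZMod n)), Subgroup.closure {u, v} = ⊤ →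
      ∀ w' : ZMod p × ZMod p, ∃ I J : ZMod p,
        I • π (Multiplicative.toAdd u) + J • π (Multiplicative.toAdd v) = w' := by
    intro u v huv w'
    obtain ⟨w, hw⟩ : ∃ w, π w = w' := by
      refine ⟨((w'.1.val : ZMod n), (w'.2.val : ZMod n)), ?_⟩
      have : ∀ k : ℕ, φ ((k : ZMod n)) = (k : ZMod p) := fun k => map_natCast φ k
      refine Prod.ext ?_ ?_ <;>
        simp [hπ, this, ZMod.natCast_val, ZMod.cast_id]
    obtain ⟨i, j, hij⟩ := Subgroup.mem_closure_pair.1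
      (huv ▸ Subgroup.mem_top (Multiplicative.ofAdd w))
    refine ⟨(i : ZMod p), (j : ZMod p), ?_⟩
    rw [Int.cast_smul_eq_zsmul, Int.cast_smul_eq_zsmul]
    have hadd : i • Multiplicative.toAdd u + j • Multiplicative.toAdd v = w := by
      have := congrArg Multiplicative.toAdd hij
      simpa using this
    rw [← map_zsmul π i, ← map_zsmul π j, ← map_add, hadd, hw]
  -- the determinant conditions
  have det1 := det_ne_zero (gen x y hxy (1, 0)) (gen x y hxy (0, 1))
  have det2 := det_ne_zero (gen a b hab (1, 0)) (gen a b hab (0, 1))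
  obtain ⟨U, V, hU, hV, hUV, hU0⟩ := key _ _ _ _ ⟨det1, det2⟩
  -- identify π of z and c
  have hπz : π (Multiplicative.toAdd z) =
      -(π (Multiplicative.toAdd x) + π (Multiplicative.toAdd y)) := by
    have hsum : Multiplicative.toAdd x + Multiplicative.toAdd y + Multiplicative.toAdd z = 0 := by
      have := congrArg Multiplicative.toAdd h1; simpa using this
    have : Multiplicative.toAdd z = -(Multiplicative.toAdd x + Multiplicative.toAdd y) :=
      eq_neg_of_add_eq_zero_right hsum
    rw [this, map_neg, map_add]
  have hπc : π (Multiplicative.toAdd c) =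
      -(π (Multiplicative.toAdd a) + π (Multiplicative.toAdd b)) := by
    have hsum : Multiplicative.toAdd a + Multiplicative.toAdd b + Multiplicative.toAdd c = 0 := by
      have := congrArg Multiplicative.toAdd h2; simpa using this
    have : Multiplicative.toAdd c = -(Multiplicative.toAdd a + Multiplicative.toAdd b) :=
      eq_neg_of_add_eq_zero_right hsum
    rw [this, map_neg, map_add]
  -- the core contradiction
  have core : ∀ u0 ∈ ({x, y, z} : Set (Multiplicative (ZMod n × ZMod n))),
      ∀ v0 ∈ ({a, b, c} : Set (Multiplicative (ZMod n × ZMod n))), ∀ l : ℕ,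
      π (Multiplicative.toAdd u0) ≠ 0 →
      π (Multiplicative.toAdd u0) = l • π (Multiplicative.toAdd v0) → False := by
    intro u0 hu0 v0 hv0 l hne heq
    set U0 := Multiplicative.toAdd u0 with hU0def
    set V0 := Multiplicative.toAdd v0 with hV0def
    have hc : π (U0 - l • V0) = 0 := by
      rw [map_sub, map_nsmul, ← heq, sub_self]
    have hmz : m • (U0 - l • V0) = 0 := by
      refine Prod.ext ?_ ?_
      · have : φ (U0 - l • V0).1 = 0 := congrArg Prod.fst hc
        simpa using (msmul_eq_zero_iff hpn hmp _).2 this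
      · have : φ (U0 - l • V0).2 = 0 := congrArg Prod.snd hc
        simpa using (msmul_eq_zero_iff hpn hmp _).2 this
    have hmu : m • U0 = ((l * m : ℕ)) • V0 := by
      have : m • U0 - m • (l • V0) = 0 := by rw [← smul_sub]; exact hmz
      have h' := sub_eq_zero.1 this
      rw [h', smul_smul, mul_comm]
    have hpow : u0 ^ ((m : ℕ) : ℤ) = (1 : Multiplicative (ZMod n × ZMod n)) *
        v0 ^ (((l * m : ℕ) : ℤ)) * 1⁻¹ := by
      rw [one_mul, inv_one, mul_one]
      apply Multiplicative.toAdd.injective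
      rw [toAdd_zpow, toAdd_zpow, natCast_zsmul, natCast_zsmul]
      exact hmu
    have h51 := h5 u0 hu0 v0 hv0 1 (m : ℤ) ((l * m : ℕ) : ℤ) hpow
    have hmU0 : m • U0 = 0 := by
      have := congrArg Multiplicative.toAdd h51
      rw [toAdd_zpow, natCast_zsmul] at this
      simpa using this
    apply hne
    refine Prod.ext ?_ ?_
    · have : m • U0.1 = 0 := by
        have := congrArg Prod.fst hmU0; simpa using this
      simpa [hπ, hφ] using (msmul_eq_zero_iff hpn hmp _).1 this
    · have : m • U0.2 = 0 := by
        have := congrArg Prod.snd hmU0; simpa using this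
      simpa [hπ, hφ] using (msmul_eq_zero_iff hpn hmp _).1 this
  -- dispatch cases
  have hUeq : ∃ u0 ∈ ({x, y, z} : Set (Multiplicative (ZMod n × ZMod n))),
      π (Multiplicative.toAdd u0) = U := by
    rcases hU with rfl | rfl | rfl
    · exact ⟨x, by simp, rfl⟩
    · exact ⟨y, by simp, rfl⟩
    · exact ⟨z, by simp, hπz⟩
  have hVeq : ∃ v0 ∈ ({a, b, c} : Set (Multiplicative (ZMod n × ZMod n))),
      π (Multiplicative.toAdd v0) = V := by
    rcases hV with rfl | rfl | rfl
    · exact ⟨a, by simp, rfl⟩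
    · exact ⟨b, by simp, rfl⟩
    · exact ⟨c, by simp, hπc⟩
  obtain ⟨u0, hu0, hu0π⟩ := hUeq
  obtain ⟨v0, hv0, hv0π⟩ := hVeq
  rcases hUV with hl | hl
  · exact core u0 hu0 v0 hv0 1 (by rw [hu0π]; exact hU0)
      (by rw [hu0π, hv0π, one_smul]; exact hl)
  · exact core u0 hu0 v0 hv0 2 (by rw [hu0π]; exact hU0)
      (by rw [hu0π, hv0π, two_smul]; exact hl)



section fwd
variable {G : Type*} [CommGroup G] [Finite G]





lemma beauville_bijection {x y z a b c : G} (h : IsBeauvilleStructure x y z a b c) :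
    ∃ F : Multiplicative (ZMod (Monoid.exponent G) × ZMod (Monoid.exponent G)) →* G,
      Function.Bijective F := by
  obtain ⟨h1, h2, h3, h4, h5⟩ := h
  have hxy := closure_pair_top h1 h3
  have hab := closure_pair_top h2 h4
  set n := Monoid.exponent G with hn
  obtain ⟨F, hFsurj, -, -⟩ := exponent_surjection hxy
  have hn0 : n ≠ 0 := Monoid.exponent_ne_zero_of_finite
  have hG0 : Nat.card G ≠ 0 := Nat.card_pos.ne'
  have hcardM : Nat.card (Multiplicative (ZMod n × ZMod n)) = n * n := by
    rw [Nat.card_congr Multiplicative.toAdd, Nat.card_prod, Nat.card_zmod]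
  have hdvd1 : Nat.card G ∣ n * n := by
    rw [← hcardM]; exact Subgroup.card_dvd_of_surjective F hFsurj
  have hdvd2 : n * n ∣ Nat.card G := by
    rw [← Nat.factorization_le_iff_dvd (mul_ne_zero hn0 hn0) hG0]
    intro p
    by_cases hp : p.Prime
    · set e := n.factorization p with he
      have hpe : p ^ e ∣ n := Nat.ordProj_dvd n p
      have split : ∀ u v : G, Subgroup.closure {u, v} = ⊤ →
          p ^ e ∣ orderOf u ∨ p ^ e ∣ orderOf v := by
        intro u v huv
        have hou : orderOf u ≠ 0 := (orderOf_pos u).ne'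
        have hov : orderOf v ≠ 0 := (orderOf_pos v).ne'
        have hdl : p ^ e ∣ Nat.lcm (orderOf u) (orderOf v) :=
          hpe.trans (exponent_dvd_lcm huv)
        have hL0 : Nat.lcm (orderOf u) (orderOf v) ≠ 0 := Nat.lcm_ne_zero hou hov
        rw [hp.pow_dvd_iff_le_factorization hL0, Nat.factorization_lcm hou hov] at hdl
        rcases le_max_iff.1 hdl with h | h
        · exact Or.inl ((hp.pow_dvd_iff_le_factorization hou).2 h)
        · exact Or.inr ((hp.pow_dvd_iff_le_factorization hov).2 h)
      have hcond : ∀ u ∈ ({x, y, z} : Set G), ∀ v ∈ ({a, b, c} : Set G),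
          ∀ i j : ℤ, u ^ i = v ^ j → u ^ i = 1 := by
        intro u hu v hv i j hij
        exact h5 u hu v hv 1 i j (by simpa using hij)
      have key : p ^ e * p ^ e ∣ Nat.card G := by
        rcases split x y hxy with hu | hu <;> rcases split a b hab with hv | hv
        · exact subgroup_prod_dvd (hcond x (by simp) a (by simp)) hu hv
        · exact subgroup_prod_dvd (hcond x (by simp) b (by simp)) hu hv
        · exact subgroup_prod_dvd (hcond y (by simp) a (by simp)) hu hv
        · exact subgroup_prod_dvd (hcond y (by simp) b (by simp)) hu hv
      rw [← pow_add] at key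
      rw [Nat.factorization_mul hn0 hn0]
      have := (hp.pow_dvd_iff_le_factorization hG0).1 key
      simpa using this
    · simp [Nat.factorization_eq_zero_of_not_prime _ hp]
  have hcard : Nat.card (Multiplicative (ZMod n × ZMod n)) = Nat.card G := by
    rw [hcardM]; exact (Nat.dvd_antisymm hdvd1 hdvd2).symm
  exact ⟨F, (Nat.bijective_iff_surjective_and_card F).2 ⟨hFsurj, hcard⟩⟩

end fwd

/-- A finite abelian group admits an unmixed Beauville structure if and only
if it is isomorphic to `(ZMod n) × (ZMod n)` for some `n` coprime to `6`. -/
theorem abelian_beauville_iff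
    {G : Type*} [CommGroup G] [Finite G] :
    (∃ x y z a b c : G, IsBeauvilleStructure x y z a b c) ↔
      ∃ n : ℕ, Nat.gcd n 6 = 1 ∧ Nonempty (G ≃* Multiplicative (ZMod n × ZMod n)) := by
  constructor
  · rintro ⟨x, y, z, a, b, c, h⟩
    obtain ⟨F, hF⟩ := beauville_bijection h
    haveI : NeZero (Monoid.exponent G) := ⟨Monoid.exponent_ne_zero_of_finite⟩
    set e : Multiplicative (ZMod (Monoid.exponent G) × ZMod (Monoid.exponent G)) ≃* G :=
      MulEquiv.ofBijective F hF with he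
    have hstr := beauville_map e.symm h
    refine ⟨Monoid.exponent G, ?_, ⟨e.symm⟩⟩
    have h2 : ¬ (2 ∣ Monoid.exponent G) := fun hdvd =>
      lift_contradiction Nat.prime_two hdvd key2 hstr
    have h3 : ¬ (3 ∣ Monoid.exponent G) := fun hdvd =>
      lift_contradiction Nat.prime_three hdvd key3 hstr
    have c2 : Nat.Coprime (Monoid.exponent G) 2 :=
      Nat.coprime_comm.1 ((Nat.prime_two.coprime_iff_not_dvd).2 h2)
    have c3 : Nat.Coprime (Monoid.exponent G) 3 :=
      Nat.coprime_comm.1 ((Nat.prime_three.coprime_iff_not_dvd).2 h3)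
    have c6 : Nat.Coprime (Monoid.exponent G) 6 := by
      have := c2.mul_right c3
      norm_num at this
      exact this
    exact c6
  · rintro ⟨n, hn, ⟨e⟩⟩
    obtain ⟨x, y, z, a, b, c, h⟩ := beauville_construction n hn
    exact ⟨e.symm x, e.symm y, e.symm z, e.symm a, e.symm b, e.symm c, beauville_map e.symm h⟩
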